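/- Let A be a symmetric positive definite real n×n matrix with largest and smallest eigenvalues λ_max and λ_min. For any v ≠ 0, with α(v) = ⟨v,Av⟩/⟨Av,Av⟩, one has ‖(I − α(v)A)v‖ ≤ ((λ_max − λ_min)/(λ_max + λ_min)) ‖v‖. -/

import Mathlib

open Matrix

theorem stmt5 {n : ℕ} (A : Matrix (Fin n) (Fin n) ℝ) (hA : A.IsSymm)
    (hpd : A.PosDef) (lmin lmax : ℝ)
    (hmin : Module.End.HasEigenvalue (Matrix.toLin' A) lmin)
    (hmax : Module.End.HasEigenvalue (Matrix.toLin' A) lmax)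
    (hbound : ∀ μ : ℝ, Module.End.HasEigenvalue (Matrix.toLin' A) μ → lmin ≤ μ ∧ μ ≤ lmax)
    (v : Fin n → ℝ) (hv : v ≠ 0)
    (αv : ℝ) (hαv : αv = v ⬝ᵥ A.mulVec v / (A.mulVec v ⬝ᵥ A.mulVec v)) :
    Real.sqrt ((v - αv • A.mulVec v) ⬝ᵥ (v - αv • A.mulVec v))
      ≤ (lmax - lmin) / (lmax + lmin) * Real.sqrt (v ⬝ᵥ v) := by
  have hH : A.IsHermitian := hpd.1
  set u := A.mulVec v with hu
  set s := v ⬝ᵥ v with hs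
  set t := v ⬝ᵥ u with ht
  set q := u ⬝ᵥ u with hq
  have hsym : ∀ x y : Fin n → ℝ, x ⬝ᵥ (A *ᵥ y) = (A *ᵥ x) ⬝ᵥ y := by
    intro x y
    rw [dotProduct_mulVec, ← mulVec_transpose, hA.eq]
  have hts : 0 < t := by simpa [ht, hu] using hpd.dotProduct_mulVec_pos hv
  have hune : u ≠ 0 := by
    intro h
    rw [ht, h, dotProduct_zero] at hts
    exact lt_irrefl 0 hts
  have hqpos : 0 < q := by
    simpa [hq] using Matrix.dotProduct_self_star_pos_iff.mpr hune
  have hvv : 0 < s := by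
    simpa [hs] using Matrix.dotProduct_self_star_pos_iff.mpr hv
  -- eigenvalue bounds
  have heig : ∀ i : Fin n, lmin ≤ hH.eigenvalues i ∧ hH.eigenvalues i ≤ lmax := by
    intro i
    apply hbound
    apply Module.End.hasEigenvalue_of_hasEigenvector (x := ⇑(hH.eigenvectorBasis i))
    constructor
    · rw [Module.End.mem_eigenspace_iff, Matrix.toLin'_apply, hH.mulVec_eigenvectorBasis]
    · simpa using hH.eigenvectorBasis.orthonormal.ne_zero i
  have hminpos : 0 < lmin := by
    obtain ⟨w, hw⟩ := hmin.exists_hasEigenvector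
    have hw0 : w ≠ 0 := hw.2
    have hAw : A *ᵥ w = lmin • w := by
      rw [← Matrix.toLin'_apply]; exact hw.apply_eq_smul
    have h1 : 0 < w ⬝ᵥ (A *ᵥ w) := by simpa using hpd.dotProduct_mulVec_pos hw0
    have hww : 0 < w ⬝ᵥ w := by
      simpa using Matrix.dotProduct_self_star_pos_iff.mpr hw0
    rw [hAw, dotProduct_smul] at h1
    simp only [smul_eq_mul] at h1
    nlinarith
  have hle : lmin ≤ lmax := (hbound lmax hmax).1
  have hMpos : 0 < lmax := lt_of_lt_of_le hminpos hle
  have hsumpos : 0 < lmax + lmin := by linarith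
  -- key positive-semidefiniteness inequality
  set E : (Fin n → ℝ) → EuclideanSpace ℝ (Fin n) := fun x => WithLp.toLp 2 x with hE
  have h1 : ∀ x y : Fin n → ℝ, x ⬝ᵥ y = inner (𝕜 := ℝ) (E x) (E y) := by
    intro x y
    simp [dotProduct, PiLp.inner_apply, RCLike.inner_apply, mul_comm, hE]
  have key : 0 ≤ (lmax + lmin) * t - q - lmax * lmin * s := by
    have expand : (lmax • v - u) ⬝ᵥ (u - lmin • v)
        = (lmax + lmin) * t - q - lmax * lmin * s := by
      simp only [sub_dotProduct, dotProduct_sub, smul_dotProduct, dotProduct_smul,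
        dotProduct_comm u v, smul_eq_mul, ← hs, ← ht, ← hq]
      ring
    rw [← expand, h1, ← (hH.eigenvectorBasis).sum_inner_mul_inner]
    apply Finset.sum_nonneg
    intro i _
    have hBi : E ⇑(hH.eigenvectorBasis i) = hH.eigenvectorBasis i := rfl
    have hinner_u : inner (𝕜 := ℝ) (E u) (hH.eigenvectorBasis i)
        = hH.eigenvalues i * inner (𝕜 := ℝ) (E v) (hH.eigenvectorBasis i) := by
      rw [← hBi, ← h1, ← h1, ← hsym, hH.mulVec_eigenvectorBasis, dotProduct_smul,
        smul_eq_mul]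
    have e1 : inner (𝕜 := ℝ) (E (lmax • v - u)) (hH.eigenvectorBasis i)
        = (lmax - hH.eigenvalues i) * inner (𝕜 := ℝ) (E v) (hH.eigenvectorBasis i) := by
      have hsplit : E (lmax • v - u) = lmax • E v - E u := rfl
      rw [hsplit, inner_sub_left, real_inner_smul_left, hinner_u]
      ring
    have e2 : inner (𝕜 := ℝ) (hH.eigenvectorBasis i) (E (u - lmin • v))
        = (hH.eigenvalues i - lmin) * inner (𝕜 := ℝ) (E v) (hH.eigenvectorBasis i) := by
      have hsplit : E (u - lmin • v) = E u - lmin • E v := rfl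
      rw [real_inner_comm, hsplit, inner_sub_left, real_inner_smul_left, hinner_u]
      ring
    rw [e1, e2]
    obtain ⟨hl, hr⟩ := heig i
    nlinarith [mul_nonneg (sub_nonneg.mpr hr) (sub_nonneg.mpr hl),
      sq_nonneg (inner (𝕜 := ℝ) (E v) (hH.eigenvectorBasis i))]
  -- main algebra
  have hexp : (v - αv • u) ⬝ᵥ (v - αv • u) = s - t ^ 2 / q := by
    simp only [sub_dotProduct, dotProduct_sub, smul_dotProduct, dotProduct_smul,
      dotProduct_comm u v, smul_eq_mul, ← hs, ← ht, ← hq, hαv]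
    field_simp
    ring
  set κ := (lmax - lmin) / (lmax + lmin) with hκ
  have hκ0 : 0 ≤ κ := div_nonneg (by linarith) (by linarith)
  have main : s - t ^ 2 / q ≤ κ ^ 2 * s := by
    set c : ℝ := 2 / (lmax + lmin) with hc
    have h2 : s - t ^ 2 / q ≤ s - 2 * c * t + c ^ 2 * q := by
      have hid : s - 2 * c * t + c ^ 2 * q - (s - t ^ 2 / q) = q * (t / q - c) ^ 2 := by
        field_simp
        ring
      nlinarith [sq_nonneg (t / q - c), hqpos]
    have h3 : s - 2 * c * t + c ^ 2 * q ≤ κ ^ 2 * s := by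
      have hcalc : κ ^ 2 * s - (s - 2 * c * t + c ^ 2 * q)
          = c ^ 2 * ((lmax + lmin) * t - q - lmax * lmin * s) := by
        rw [hκ, hc]
        field_simp
        ring
      nlinarith [key, sq_nonneg c]
    linarith
  calc Real.sqrt ((v - αv • u) ⬝ᵥ (v - αv • u))
      = Real.sqrt (s - t ^ 2 / q) := by rw [hexp]
    _ ≤ Real.sqrt (κ ^ 2 * s) := Real.sqrt_le_sqrt main
    _ = κ * Real.sqrt s := by rw [Real.sqrt_mul (sq_nonneg κ), Real.sqrt_sq hκ0]
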